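/- Suppose α ≥ 2 and 0 < ε < 1/5. Then there exists a continuous path σ : [0,1] → ℝ² of bounded variation with σ(0) = X_init, σ(1) = X_goal, σ(s) ∈ X_free for all s ∈ [0,1], and TV(σ) ≤ α + 8ε. Moreover α + 8ε < 2α − 2ε, so every feasible path whose image intersects B₁ = [0,1] × [α+1, α+2] has strictly larger total variation than this path. -/

import Mathlib

open scoped NNReal ENNReal

/-- A point of the plane `ℝ²` (as a Euclidean space) with given coordinates. -/
noncomputable def pt (x y : ℝ) : EuclideanSpace ℝ (Fin 2) := WithLp.toLp 2 ![x, y]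

/-- Total variation of a path over `[0,1]`: the supremum over all partitions
`0 = b₀ < ⋯ < bₙ = 1` of `Σ ‖σ(bᵢ) − σ(bᵢ₋₁)‖`. -/
noncomputable def TV (σ : ℝ → EuclideanSpace ℝ (Fin 2)) : ℝ :=
  (eVariationOn σ (Set.Icc 0 1)).toReal

lemma lip_aff (v w : EuclideanSpace ℝ (Fin 2)) (c : ℝ) :
    LipschitzWith ‖w‖₊ (fun s : ℝ => v + (s - c) • w) := by
  apply LipschitzWith.of_dist_le_mul
  intro a b
  have : (v + (a - c) • w) - (v + (b - c) • w) = (a - b) • w := by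
    rw [add_sub_add_left_eq_sub, ← sub_smul]; ring_nf
  rw [dist_eq_norm, this, norm_smul, Real.dist_eq]
  simp [mul_comm]

lemma evar_le_of_lip {f : ℝ → EuclideanSpace ℝ (Fin 2)} {C : ℝ≥0} {a b : ℝ} (hab : a ≤ b)
    (h : LipschitzWith C f) : eVariationOn f (Set.Icc a b) ≤ C * ENNReal.ofReal (b - a) := by
  have h2 := (h.lipschitzOnWith (s := Set.univ)).comp_eVariationOn_le
    (g := (id : ℝ → ℝ)) (s := Set.Icc a b) (Set.mapsTo_univ _ _)
  have h3 : eVariationOn (id : ℝ → ℝ) (Set.Icc a b) ≤ ENNReal.ofReal (b - a) := by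
    have := (monotoneOn_id (s := Set.Icc a b)).eVariationOn_le (a := a) (b := b)
      ⟨le_rfl, hab⟩ ⟨hab, le_rfl⟩
    simpa using this
  calc eVariationOn f (Set.Icc a b) = eVariationOn (f ∘ id) (Set.Icc a b) := rfl
    _ ≤ C * eVariationOn (id : ℝ → ℝ) (Set.Icc a b) := h2
    _ ≤ C * ENNReal.ofReal (b - a) := mul_le_mul_right h3 _

lemma norm_pt_0y (y : ℝ) (hy : 0 ≤ y) : ‖pt 0 y‖ = y := by
  simp [pt, EuclideanSpace.norm_eq, Fin.sum_univ_two]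
  rw [Real.sqrt_sq hy]

lemma norm_pt_x0 (x : ℝ) (hx : 0 ≤ x) : ‖pt x 0‖ = x := by
  simp [pt, EuclideanSpace.norm_eq, Fin.sum_univ_two]
  rw [Real.sqrt_sq hx]

set_option maxHeartbeats 1000000 in
/-- In the promenade problem (configuration space `X = [0,α+2]²`, obstacle
`X_obs = [1,α+1]²`, `X_free = X \ X_obs`, `X_init = (1−ε, 1+2ε)`,
`X_goal = (α+1+ε, 1+2ε)`, with `α ≥ 2`, `0 < ε < 1/5`), there is a feasible path
(continuous, of bounded variation, from `X_init` to `X_goal`, staying in `X_free`)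
of total variation at most `α + 8ε`; moreover `α + 8ε < 2α − 2ε`, so every feasible
path whose image meets `B₁ = [0,1] × [α+1, α+2]` has strictly larger total variation. -/
theorem promenade_short_feasible_path (α ε : ℝ) (hα : 2 ≤ α) (hε0 : 0 < ε) (hε1 : ε < 1/5) :
    (∃ σ : ℝ → EuclideanSpace ℝ (Fin 2),
      ContinuousOn σ (Set.Icc 0 1) ∧ BoundedVariationOn σ (Set.Icc 0 1) ∧
      σ 0 = pt (1 - ε) (1 + 2*ε) ∧ σ 1 = pt (α + 1 + ε) (1 + 2*ε) ∧
      (∀ s ∈ Set.Icc (0:ℝ) 1,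
        (σ s 0 ∈ Set.Icc (0:ℝ) (α+2) ∧ σ s 1 ∈ Set.Icc (0:ℝ) (α+2)) ∧
        ¬(σ s 0 ∈ Set.Icc (1:ℝ) (α+1) ∧ σ s 1 ∈ Set.Icc (1:ℝ) (α+1))) ∧
      TV σ ≤ α + 8*ε) ∧
    α + 8*ε < 2*α - 2*ε := by
  constructor
  · -- the three affine pieces
    set g1 : ℝ → EuclideanSpace ℝ (Fin 2) :=
      fun s => pt (1 - ε) (1 + 2*ε) + (s - 0) • pt 0 (-(9*ε)) with hg1
    set g2 : ℝ → EuclideanSpace ℝ (Fin 2) :=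
      fun s => pt (1 - ε) (1 - ε) + (s - 1/3) • pt (3*(α + 2*ε)) 0 with hg2
    set g3 : ℝ → EuclideanSpace ℝ (Fin 2) :=
      fun s => pt (α + 1 + ε) (1 - ε) + (s - 2/3) • pt 0 (9*ε) with hg3
    set σ : ℝ → EuclideanSpace ℝ (Fin 2) :=
      fun s => if s ≤ 1/3 then g1 s else if s ≤ 2/3 then g2 s else g3 s with hσ
    -- coordinate formulas
    have c1 : ∀ s : ℝ, g1 s 0 = 1 - ε ∧ g1 s 1 = 1 + 2*ε - 9*ε*s := by
      intro s; constructor <;> (simp [hg1, pt]; try ring)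
    have c2 : ∀ s : ℝ, g2 s 0 = 1 - ε + 3*(α + 2*ε)*(s - 1/3) ∧ g2 s 1 = 1 - ε := by
      intro s; constructor <;> (simp [hg2, pt]; try ring)
    have c3 : ∀ s : ℝ, g3 s 0 = α + 1 + ε ∧ g3 s 1 = 1 - ε + 9*ε*(s - 2/3) := by
      intro s; constructor <;> (simp [hg3, pt]; try ring)
    -- junctions
    have ext2 : ∀ (p q : EuclideanSpace ℝ (Fin 2)), p 0 = q 0 → p 1 = q 1 → p = q := by
      intro p q h0 h1; ext i; fin_cases i <;> assumption
    have j12 : g1 (1/3) = g2 (1/3) := by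
      apply ext2
      · rw [(c1 _).1, (c2 _).1]; ring
      · rw [(c1 _).2, (c2 _).2]; ring
    have j23 : g2 (2/3) = g3 (2/3) := by
      apply ext2
      · rw [(c2 _).1, (c3 _).1]; ring
      · rw [(c2 _).2, (c3 _).2]; ring
    -- continuity
    have cg1 : Continuous g1 := by
      exact continuous_const.add ((continuous_id.sub continuous_const).smul continuous_const)
    have cg2 : Continuous g2 := by
      exact continuous_const.add ((continuous_id.sub continuous_const).smul continuous_const)
    have cg3 : Continuous g3 := by
      exact continuous_const.add ((continuous_id.sub continuous_const).smul continuous_const)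
    have cinner : Continuous (fun s : ℝ => if s ≤ 2/3 then g2 s else g3 s) := by
      apply Continuous.if_le cg2 cg3 continuous_id continuous_const
      intro x hx
      have hx' : x = 2/3 := hx
      subst hx'; exact j23
    have hcont : Continuous σ := by
      rw [hσ]
      apply Continuous.if_le cg1 cinner continuous_id continuous_const
      intro x hx
      have hx' : x = 1/3 := hx
      subst hx'
      rw [if_pos (by norm_num : (1:ℝ)/3 ≤ 2/3)]
      exact j12
    -- piecewise identities
    have eq1 : Set.EqOn σ g1 (Set.Icc 0 (1/3)) := by
      intro s hs; rw [hσ]; simp only [if_pos hs.2]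
    have eq2 : Set.EqOn σ g2 (Set.Icc (1/3) (2/3)) := by
      intro s hs
      rw [hσ]
      by_cases h : s ≤ 1/3
      · have : s = 1/3 := le_antisymm h hs.1
        simp only [if_pos h]
        rw [this, j12]
      · simp only [if_neg h, if_pos hs.2]
    have eq3 : Set.EqOn σ g3 (Set.Icc (2/3) 1) := by
      intro s hs
      rw [hσ]
      have h1 : ¬ s ≤ 1/3 := by
        intro h; linarith [hs.1]
      by_cases h : s ≤ 2/3
      · have : s = 2/3 := le_antisymm h hs.1
        simp only [if_neg h1, if_pos h]
        rw [this, j23]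
      · simp only [if_neg h1, if_neg h]
    -- variation bounds on pieces
    have hε' : (0:ℝ) ≤ 9*ε := by linarith
    have hα' : (0:ℝ) ≤ 3*(α + 2*ε) := by linarith
    have e1 : eVariationOn σ (Set.Icc 0 (1/3)) ≤ ENNReal.ofReal (3*ε) := by
      rw [eVariationOn.eq_of_eqOn eq1]
      calc eVariationOn g1 (Set.Icc 0 (1/3))
          ≤ ‖pt 0 (-(9*ε))‖₊ * ENNReal.ofReal (1/3 - 0) := by
            exact evar_le_of_lip (by norm_num) (lip_aff _ _ _)
        _ = ENNReal.ofReal (3*ε) := by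
            rw [← ENNReal.ofReal_coe_nnreal, coe_nnnorm]
            have : ‖pt 0 (-(9*ε))‖ = 9*ε := by
              rw [show pt 0 (-(9*ε)) = -pt 0 (9*ε) by
                ext i; fin_cases i <;> simp [pt]]
              rw [norm_neg, norm_pt_0y _ hε']
            rw [this, ← ENNReal.ofReal_mul hε']
            congr 1; ring
    have e2 : eVariationOn σ (Set.Icc (1/3) (2/3)) ≤ ENNReal.ofReal (α + 2*ε) := by
      rw [eVariationOn.eq_of_eqOn eq2]
      calc eVariationOn g2 (Set.Icc (1/3) (2/3))
          ≤ ‖pt (3*(α + 2*ε)) 0‖₊ * ENNReal.ofReal (2/3 - 1/3) := by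
            exact evar_le_of_lip (by norm_num) (lip_aff _ _ _)
        _ = ENNReal.ofReal (α + 2*ε) := by
            rw [← ENNReal.ofReal_coe_nnreal, coe_nnnorm, norm_pt_x0 _ hα', ← ENNReal.ofReal_mul hα']
            congr 1; ring
    have e3 : eVariationOn σ (Set.Icc (2/3) 1) ≤ ENNReal.ofReal (3*ε) := by
      rw [eVariationOn.eq_of_eqOn eq3]
      calc eVariationOn g3 (Set.Icc (2/3) 1)
          ≤ ‖pt 0 (9*ε)‖₊ * ENNReal.ofReal (1 - 2/3) := by
            exact evar_le_of_lip (by norm_num) (lip_aff _ _ _)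
        _ = ENNReal.ofReal (3*ε) := by
            rw [← ENNReal.ofReal_coe_nnreal, coe_nnnorm, norm_pt_0y _ hε', ← ENNReal.ofReal_mul hε']
            congr 1; ring
    -- additivity
    have i1 : Set.Icc (0:ℝ) 1 ∩ Set.Icc 0 (1/3) = Set.Icc (0:ℝ) (1/3) := by
      rw [Set.Icc_inter_Icc]; congr 1 <;> norm_num
    have i2 : Set.Icc (0:ℝ) 1 ∩ Set.Icc (1/3) 1 = Set.Icc (1/3:ℝ) 1 := by
      rw [Set.Icc_inter_Icc]; congr 1 <;> norm_num
    have i3 : Set.Icc (0:ℝ) 1 ∩ Set.Icc (1/3) (2/3) = Set.Icc (1/3:ℝ) (2/3) := by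
      rw [Set.Icc_inter_Icc]; congr 1 <;> norm_num
    have i4 : Set.Icc (0:ℝ) 1 ∩ Set.Icc (2/3) 1 = Set.Icc (2/3:ℝ) 1 := by
      rw [Set.Icc_inter_Icc]; congr 1 <;> norm_num
    have i5 : Set.Icc (0:ℝ) 1 ∩ Set.Icc 0 1 = Set.Icc (0:ℝ) 1 := Set.inter_self _
    have split1 := eVariationOn.Icc_add_Icc σ (a := 0) (b := 1/3) (c := 1)
      (by norm_num) (by norm_num) (s := Set.Icc 0 1) (by norm_num)
    have split2 := eVariationOn.Icc_add_Icc σ (a := 1/3) (b := 2/3) (c := 1)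
      (by norm_num) (by norm_num) (s := Set.Icc 0 1) (by norm_num)
    rw [i1, i2, i5] at split1
    rw [i3, i4, i2] at split2
    have etot : eVariationOn σ (Set.Icc 0 1) ≤ ENNReal.ofReal (α + 8*ε) := by
      rw [← split1, ← split2]
      calc eVariationOn σ (Set.Icc 0 (1/3)) +
            (eVariationOn σ (Set.Icc (1/3) (2/3)) + eVariationOn σ (Set.Icc (2/3) 1))
          ≤ ENNReal.ofReal (3*ε) + (ENNReal.ofReal (α + 2*ε) + ENNReal.ofReal (3*ε)) :=
            add_le_add e1 (add_le_add e2 e3)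
        _ = ENNReal.ofReal (α + 8*ε) := by
            rw [← ENNReal.ofReal_add (by linarith) (by linarith),
              ← ENNReal.ofReal_add (by linarith) (by linarith)]
            ring_nf
    refine ⟨σ, hcont.continuousOn, ?_, ?_, ?_, ?_, ?_⟩
    · exact ne_top_of_le_ne_top ENNReal.ofReal_ne_top etot
    · rw [eq1 ⟨le_rfl, by norm_num⟩]
      apply ext2
      · rw [(c1 _).1]; simp [pt]
      · rw [(c1 _).2]; simp [pt]; try ring
    · rw [eq3 ⟨by norm_num, le_rfl⟩]
      apply ext2
      · rw [(c3 _).1]; simp [pt]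
      · rw [(c3 _).2]; simp [pt]; try ring
    · intro s hs
      rcases le_or_gt s (1/3) with h1 | h1
      · have hx : σ s 0 = 1 - ε := by rw [eq1 ⟨hs.1, h1⟩]; exact (c1 s).1
        have hy : σ s 1 = 1 + 2*ε - 9*ε*s := by rw [eq1 ⟨hs.1, h1⟩]; exact (c1 s).2
        rw [hx, hy]
        refine ⟨⟨⟨by linarith, by linarith⟩, ⟨by nlinarith [hs.1], by nlinarith [hs.1]⟩⟩, ?_⟩
        rintro ⟨⟨hx1, _⟩, _⟩; linarith
      · rcases le_or_gt s (2/3) with h2 | h2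
        · have hx : σ s 0 = 1 - ε + 3*(α + 2*ε)*(s - 1/3) := by
            rw [eq2 ⟨h1.le, h2⟩]; exact (c2 s).1
          have hy : σ s 1 = 1 - ε := by rw [eq2 ⟨h1.le, h2⟩]; exact (c2 s).2
          rw [hx, hy]
          refine ⟨⟨⟨by nlinarith, by nlinarith⟩, ⟨by linarith, by linarith⟩⟩, ?_⟩
          rintro ⟨_, ⟨hy1, _⟩⟩; linarith
        · have hx : σ s 0 = α + 1 + ε := by rw [eq3 ⟨h2.le, hs.2⟩]; exact (c3 s).1
          have hy : σ s 1 = 1 - ε + 9*ε*(s - 2/3) := by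
            rw [eq3 ⟨h2.le, hs.2⟩]; exact (c3 s).2
          rw [hx, hy]
          refine ⟨⟨⟨by linarith, by linarith⟩, ⟨by nlinarith, by nlinarith [hs.2]⟩⟩, ?_⟩
          rintro ⟨⟨_, hx2⟩, _⟩; linarith
    · exact ENNReal.toReal_le_of_le_ofReal (by linarith) etot
  · linarith
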